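/- arXiv:1411.7220 — 7 statements merged into one kernel-verified Lean document; each statement's English description precedes it below -/
import Mathlib

section
/- For M in E with M_tot < 1, each partial derivative of F_ij with respect to M_{i'j'} is bounded in absolute value by π_ij. Explicitly, ∂F_ij/∂M_{i'j'} = π_ij [ ((x_i − M_{i,·})/(1 − M_tot)) ((y_j − M_{·,j})/(1 − M_tot)) − ((x_i − M_{i,·})/(1 − M_tot)) δ_{jj'} − ((y_j − M_{·,j})/(1 − M_tot)) δ_{ii'} ], and |∂F_ij/∂M_{i'j'}| ≤ π_ij. -/
open Finset

/-- The partial derivative of `F_ij` with respect to `M_{i'j'}` has the stated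
formula and is bounded in absolute value by `π_ij`. -/
theorem rate_function_deriv_bound (k : ℕ) (hk : 1 ≤ k)
    (x y : Fin k → ℝ) (π : Fin k → Fin k → ℝ)
    (hx : ∀ i, 0 ≤ x i) (hy : ∀ j, 0 ≤ y j)
    (hxsum : ∑ i, x i = 1) (hysum : ∑ j, y j = 1)
    (hπ : ∀ i j, 0 < π i j)
    (M : Matrix (Fin k) (Fin k) ℝ)
    (hM : ∀ i j, 0 ≤ M i j)
    (hrow : ∀ i, ∑ j, M i j ≤ x i)
    (hcol : ∀ j, ∑ i, M i j ≤ y j)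
    (htot : ∑ i, ∑ j, M i j < 1)
    (i j i' j' : Fin k) :
    (HasDerivAt
      (fun t : ℝ =>
        π i j * (x i - ∑ j'', (M + t • Matrix.single i' j' (1:ℝ)) i j'')
          * (y j - ∑ i'', (M + t • Matrix.single i' j' (1:ℝ)) i'' j)
          / (1 - ∑ i'', ∑ j'', (M + t • Matrix.single i' j' (1:ℝ)) i'' j''))
      (π i j *
        (((x i - ∑ j'', M i j'') / (1 - ∑ i'', ∑ j'', M i'' j''))
          * ((y j - ∑ i'', M i'' j) / (1 - ∑ i'', ∑ j'', M i'' j''))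
        - ((x i - ∑ j'', M i j'') / (1 - ∑ i'', ∑ j'', M i'' j''))
            * (if j = j' then 1 else 0)
        - ((y j - ∑ i'', M i'' j) / (1 - ∑ i'', ∑ j'', M i'' j''))
            * (if i = i' then 1 else 0)))
      0)
    ∧
    |π i j *
        (((x i - ∑ j'', M i j'') / (1 - ∑ i'', ∑ j'', M i'' j''))
          * ((y j - ∑ i'', M i'' j) / (1 - ∑ i'', ∑ j'', M i'' j''))
        - ((x i - ∑ j'', M i j'') / (1 - ∑ i'', ∑ j'', M i'' j''))
            * (if j = j' then 1 else 0)
        - ((y j - ∑ i'', M i'' j) / (1 - ∑ i'', ∑ j'', M i'' j''))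
            * (if i = i' then 1 else 0))|
      ≤ π i j := by
  set ra : ℝ := ∑ j'', M i j'' with hra
  set rb : ℝ := ∑ i'', M i'' j with hrb
  set s : ℝ := ∑ i'', ∑ j'', M i'' j'' with hs
  set α : ℝ := (if i = i' then (1:ℝ) else 0) with hα
  set β : ℝ := (if j = j' then (1:ℝ) else 0) with hβ
  have hstdrow : ∀ (c : ℝ) (i0 : Fin k),
      ∑ j2, Matrix.single i' j' c i0 j2 = if i0 = i' then c else 0 := by
    intro c i0
    simp [Matrix.single, Matrix.of_apply, ite_and, Finset.sum_ite_eq, eq_comm]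
  have hstdcol : ∀ (c : ℝ) (j0 : Fin k),
      ∑ i2, Matrix.single i' j' c i2 j0 = if j0 = j' then c else 0 := by
    intro c j0
    simp [Matrix.single, Matrix.of_apply, ite_and, Finset.sum_ite_eq, eq_comm]
  have hstdtot : ∀ (c : ℝ), ∑ i2, ∑ j2, Matrix.single i' j' c i2 j2 = c := by
    intro c
    simp [hstdrow, Finset.sum_ite_eq]
  -- denominator positivity
  have hc : (0:ℝ) < 1 - s := by linarith
  have hcne : (1:ℝ) - s ≠ 0 := ne_of_gt hc
  -- rewrite the function
  have hfun : (fun t : ℝ =>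
        π i j * (x i - ∑ j'', (M + t • Matrix.single i' j' (1:ℝ)) i j'')
          * (y j - ∑ i'', (M + t • Matrix.single i' j' (1:ℝ)) i'' j)
          / (1 - ∑ i'', ∑ j'', (M + t • Matrix.single i' j' (1:ℝ)) i'' j''))
      = fun t : ℝ => π i j * (x i - (ra + t * α)) * (y j - (rb + t * β)) / ((1 - s) - t) := by
    funext t
    have h1 : ∑ j'', (M + t • Matrix.single i' j' (1:ℝ)) i j'' = ra + t * α := by
      rw [hα, hra]
      simp only [Matrix.add_apply, Matrix.smul_apply, smul_eq_mul,
        Finset.sum_add_distrib, ← Finset.mul_sum, hstdrow]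
    have h2 : ∑ i'', (M + t • Matrix.single i' j' (1:ℝ)) i'' j = rb + t * β := by
      rw [hβ, hrb]
      simp only [Matrix.add_apply, Matrix.smul_apply, smul_eq_mul,
        Finset.sum_add_distrib, ← Finset.mul_sum, hstdcol]
    have h3 : ∑ i'', ∑ j'', (M + t • Matrix.single i' j' (1:ℝ)) i'' j'' = s + t := by
      have : ∀ i0 : Fin k, ∑ j'', (M + t • Matrix.single i' j' (1:ℝ)) i0 j''
          = (∑ j'', M i0 j'') + t * (if i0 = i' then 1 else 0) := by
        intro i0
        simp only [Matrix.add_apply, Matrix.smul_apply, smul_eq_mul,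
          Finset.sum_add_distrib, ← Finset.mul_sum, hstdrow]
      rw [hs]
      simp only [this, Finset.sum_add_distrib, ← Finset.mul_sum, Finset.sum_ite_eq',
        Finset.mem_univ, if_true]
      ring
    rw [h1, h2, h3]; ring_nf
  have hderiv : HasDerivAt
      (fun t : ℝ => π i j * (x i - (ra + t * α)) * (y j - (rb + t * β)) / ((1 - s) - t))
      (π i j * ((x i - ra) / (1 - s) * ((y j - rb) / (1 - s))
        - (x i - ra) / (1 - s) * β - (y j - rb) / (1 - s) * α)) 0 := by
    have hnum : HasDerivAt (fun t : ℝ => π i j * (x i - (ra + t * α)) * (y j - (rb + t * β)))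
        (π i j * (-α) * (y j - rb) + π i j * (x i - ra) * (-β)) 0 := by
      have ha : HasDerivAt (fun t : ℝ => π i j * (x i - (ra + t * α))) (π i j * (-α)) 0 := by
        have := ((hasDerivAt_id (0:ℝ)).const_mul α).const_sub (x i - ra)
        simpa [mul_comm, sub_sub] using this.const_mul (π i j)
      have hb : HasDerivAt (fun t : ℝ => y j - (rb + t * β)) (-β) 0 := by
        simpa [mul_comm, sub_sub] using ((hasDerivAt_id (0:ℝ)).const_mul β).const_sub (y j - rb)
      simpa [mul_zero, zero_mul] using ha.fun_mul hb
    have hden : HasDerivAt (fun t : ℝ => (1 - s) - t) (-1) 0 := by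
      simpa using (hasDerivAt_id (0:ℝ)).const_sub (1 - s)
    have hd0 : (1 - s) - (0:ℝ) ≠ 0 := by simpa using hcne
    have := hnum.fun_div hden hd0
    convert this using 1
    · rfl
    · rfl
    field_simp
    ring
  rw [hfun]
  refine ⟨hderiv, ?_⟩
  -- bound
  set a : ℝ := (x i - ra) / (1 - s) with hadef
  set b : ℝ := (y j - rb) / (1 - s) with hbdef
  have ha0 : 0 ≤ a := div_nonneg (by linarith [hrow i]) (le_of_lt hc)
  have hb0 : 0 ≤ b := div_nonneg (by linarith [hcol j]) (le_of_lt hc)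
  have hasum : x i - ra ≤ 1 - s := by
    have h1 : s = ra + ∑ i'' ∈ Finset.univ.erase i, ∑ j'', M i'' j'' := by
      rw [hs, hra, ← Finset.add_sum_erase _ _ (Finset.mem_univ i)]
    have h2 : 1 - x i = ∑ i'' ∈ Finset.univ.erase i, x i'' := by
      rw [← hxsum, ← Finset.add_sum_erase _ _ (Finset.mem_univ i)]; ring
    have h3 : ∑ i'' ∈ Finset.univ.erase i, ∑ j'', M i'' j''
        ≤ ∑ i'' ∈ Finset.univ.erase i, x i'' :=
      Finset.sum_le_sum fun i'' _ => hrow i''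
    linarith
  have hbsum : y j - rb ≤ 1 - s := by
    have hs' : s = ∑ j'', ∑ i'', M i'' j'' := Finset.sum_comm
    have h1 : s = rb + ∑ j'' ∈ Finset.univ.erase j, ∑ i'', M i'' j'' := by
      rw [hs', hrb, ← Finset.add_sum_erase _ _ (Finset.mem_univ j)]
    have h2 : 1 - y j = ∑ j'' ∈ Finset.univ.erase j, y j'' := by
      rw [← hysum, ← Finset.add_sum_erase _ _ (Finset.mem_univ j)]; ring
    have h3 : ∑ j'' ∈ Finset.univ.erase j, ∑ i'', M i'' j''
        ≤ ∑ j'' ∈ Finset.univ.erase j, y j'' :=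
      Finset.sum_le_sum fun j'' _ => hcol j''
    linarith
  have ha1 : a ≤ 1 := by rw [hadef, div_le_one hc]; exact hasum
  have hb1 : b ≤ 1 := by rw [hbdef, div_le_one hc]; exact hbsum
  have hkey : |a * b - a * β - b * α| ≤ 1 := by
    rw [abs_le]
    constructor
    · rw [hα, hβ]
      split <;> split <;> nlinarith
    · rw [hα, hβ]
      split <;> split <;> nlinarith
  calc |π i j * (a * b - a * β - b * α)| = π i j * |a * b - a * β - b * α| := by
        rw [abs_mul, abs_of_pos (hπ i j)]
    _ ≤ π i j * 1 := by
        exact mul_le_mul_of_nonneg_left hkey (le_of_lt (hπ i j))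
    _ = π i j := mul_one _
end

section
/- Let Π satisfy the fine balance condition π_ij = ᾱ_i + β̄_j. Define A_i(t) = x_i e^{−ᾱ_i t} / Σ_{i'} x_{i'} e^{−ᾱ_{i'} t} and B_j(t) = y_j e^{−β̄_j t} / Σ_{j'} y_{j'} e^{−β̄_{j'} t}. Then A and B solve the replicator equations: A_i'(t) = −A_i(t)[ (ΠB(t))_i − A(t)^T Π B(t) ] and B_j'(t) = −B_j(t)[ (Π^T A(t))_j − B(t)^T Π^T A(t) ], with initial conditions A_i(0) = x_i, B_j(0) = y_j. -/
open Finset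

lemma repl_aux (k : ℕ) (hk : 1 ≤ k) (c : Fin k → ℝ) (w : Fin k → ℝ) (hw : ∀ i, 0 < w i)
    (A : Fin k → ℝ → ℝ)
    (hA : ∀ i t, A i t = w i * Real.exp (-c i * t) / ∑ i', w i' * Real.exp (-c i' * t)) :
    (∀ t, ∑ i, A i t = 1) ∧
    (∀ i t, HasDerivAt (A i) (A i t * ((∑ i', c i' * A i' t) - c i)) t) := by
  haveI : NeZero k := ⟨by omega⟩
  set S : ℝ → ℝ := fun t => ∑ i', w i' * Real.exp (-c i' * t) with hS
  have hSpos : ∀ t, 0 < S t := fun t =>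
    Finset.sum_pos (fun i _ => mul_pos (hw i) (Real.exp_pos _))
      (Finset.univ_nonempty_iff.mpr (Fin.pos_iff_nonempty.mp (by omega)))
  have hsum1 : ∀ t, ∑ i, A i t = 1 := by
    intro t
    have : ∑ i, A i t = (∑ i, w i * Real.exp (-c i * t)) / S t := by
      rw [Finset.sum_div]; exact Finset.sum_congr rfl fun i _ => hA i t
    rw [this, div_self (hSpos t).ne']
  refine ⟨hsum1, fun i t => ?_⟩
  have hf : ∀ i' (t : ℝ), HasDerivAt (fun s => w i' * Real.exp (-c i' * s))
      (-c i' * (w i' * Real.exp (-c i' * t))) t := by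
    intro i' t
    have h := (((hasDerivAt_id t).const_mul (-c i')).exp).const_mul (w i')
    refine h.congr_deriv ?_
    simp only [id_eq]
    ring
  have hSder : HasDerivAt S (∑ i', -c i' * (w i' * Real.exp (-c i' * t))) t :=
    HasDerivAt.fun_sum fun i' _ => hf i' t
  have hAi : A i = fun s => w i * Real.exp (-c i * s) / S s := funext fun s => hA i s
  rw [hAi]
  have hdiv := (hf i t).fun_div hSder (hSpos t).ne'
  refine hdiv.congr_deriv ?_
  have hcsum : ∑ i', c i' * A i' t
      = (∑ i', c i' * (w i' * Real.exp (-c i' * t))) / S t := by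
    rw [Finset.sum_div]
    exact Finset.sum_congr rfl fun i' _ => by rw [hA]; ring
  have hneg : ∑ i', -c i' * (w i' * Real.exp (-c i' * t))
      = -∑ i', c i' * (w i' * Real.exp (-c i' * t)) := by
    rw [← Finset.sum_neg_distrib]; exact Finset.sum_congr rfl fun i' _ => by ring
  rw [hcsum, hneg]
  have hS0 : S t ≠ 0 := (hSpos t).ne'
  field_simp
  ring

/-- Under fine balance, the explicit exponential formulas solve the replicator
equations with initial conditions `A_i(0) = x_i`, `B_j(0) = y_j`. -/
theorem fine_balance_replicator (k : ℕ) (hk : 1 ≤ k)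
    (α β : Fin k → ℝ) (hα : ∀ i, 0 ≤ α i) (hβ : ∀ j, 0 ≤ β j)
    (x y : Fin k → ℝ) (hx : ∀ i, 0 < x i) (hy : ∀ j, 0 < y j)
    (hxsum : ∑ i, x i = 1) (hysum : ∑ j, y j = 1)
    (π : Fin k → Fin k → ℝ) (hπ : ∀ i j, π i j = α i + β j)
    (A B : Fin k → ℝ → ℝ)
    (hA : ∀ i t, A i t = x i * Real.exp (-α i * t) / ∑ i', x i' * Real.exp (-α i' * t))
    (hB : ∀ j t, B j t = y j * Real.exp (-β j * t) / ∑ j', y j' * Real.exp (-β j' * t)) :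
    (∀ i, A i 0 = x i) ∧ (∀ j, B j 0 = y j) ∧
    (∀ i t, HasDerivAt (A i)
      (-(A i t) * ((∑ j, π i j * B j t) - ∑ i', ∑ j, π i' j * A i' t * B j t)) t) ∧
    (∀ j t, HasDerivAt (B j)
      (-(B j t) * ((∑ i, π i j * A i t) - ∑ i, ∑ j', π i j' * A i t * B j' t)) t) := by
  obtain ⟨hAsum, hAder⟩ := repl_aux k hk α x hx A hA
  obtain ⟨hBsum, hBder⟩ := repl_aux k hk β y hy B hB
  refine ⟨fun i => ?_, fun j => ?_, fun i t => ?_, fun j t => ?_⟩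
  · rw [hA]; simp [hxsum]
  · rw [hB]; simp [hysum]
  · have key : (∑ j, π i j * B j t) - ∑ i', ∑ j, π i' j * A i' t * B j t
        = α i - ∑ i', α i' * A i' t := by
      have h1 : ∑ j, π i j * B j t = α i + ∑ j, β j * B j t := by
        simp only [hπ, add_mul]
        rw [Finset.sum_add_distrib, ← Finset.mul_sum, hBsum, mul_one]
      have h2 : ∑ i', ∑ j, π i' j * A i' t * B j t
          = (∑ i', α i' * A i' t) + ∑ j, β j * B j t := by
        have : ∀ i', ∑ j, π i' j * A i' t * B j t
            = α i' * A i' t + A i' t * ∑ j, β j * B j t := by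
          intro i'
          have e : ∀ j, π i' j * A i' t * B j t
              = α i' * A i' t * B j t + A i' t * (β j * B j t) := fun j => by
            rw [hπ]; ring
          rw [Finset.sum_congr rfl fun j _ => e j, Finset.sum_add_distrib,
            ← Finset.mul_sum, ← Finset.mul_sum, hBsum, mul_one]
        rw [Finset.sum_congr rfl fun i' _ => this i', Finset.sum_add_distrib,
          ← Finset.sum_mul, hAsum, one_mul]
      rw [h1, h2]; ring
    rw [key]
    convert hAder i t using 1
    ring
  · have key : (∑ i, π i j * A i t) - ∑ i, ∑ j', π i j' * A i t * B j' t
        = β j - ∑ j', β j' * B j' t := by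
      have h1 : ∑ i, π i j * A i t = (∑ i, α i * A i t) + β j := by
        have e : ∀ i, π i j * A i t = α i * A i t + β j * A i t := fun i => by
          rw [hπ]; ring
        rw [Finset.sum_congr rfl fun i _ => e i, Finset.sum_add_distrib,
          ← Finset.mul_sum, hAsum, mul_one]
      have h2 : ∑ i, ∑ j', π i j' * A i t * B j' t
          = (∑ i, α i * A i t) + ∑ j', β j' * B j' t := by
        have : ∀ i, ∑ j', π i j' * A i t * B j' t
            = α i * A i t + A i t * ∑ j', β j' * B j' t := by
          intro i
          have e : ∀ j', π i j' * A i t * B j' t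
              = α i * A i t * B j' t + A i t * (β j' * B j' t) := fun j' => by
            rw [hπ]; ring
          rw [Finset.sum_congr rfl fun j' _ => e j', Finset.sum_add_distrib,
            ← Finset.mul_sum, ← Finset.mul_sum, hBsum, mul_one]
        rw [Finset.sum_congr rfl fun i _ => this i, Finset.sum_add_distrib,
          ← Finset.sum_mul, hAsum, one_mul]
      rw [h1, h2]; ring
    rw [key]
    convert hBder j t using 1
    ring
end

section
/- Under the fine balance condition, the functions Q_ij(t) = x_i y_j (1 − e^{−π_ij t}) satisfy the fluid limit ODE Q_ij'(t) = π_ij (x_i − Q_{i,·}(t))(y_j − Q_{·,j}(t))/(1 − Q_tot(t)) with Q_ij(0) = 0, where Q_{i,·}(t) = Σ_j Q_ij(t), Q_{·,j}(t) = Σ_i Q_ij(t), Q_tot(t) = Σ_{i,j} Q_ij(t). In particular, Q_ij(t) → x_i y_j as t → ∞ (panmixia). -/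
open Finset Filter

/-- Under fine balance, `Q_ij(t) = x_i y_j (1 − e^{−π_ij t})` solves the fluid
limit ODE and converges to the panmictic pattern `x_i y_j`. -/
theorem fine_balance_pair_type (k : ℕ) (hk : 1 ≤ k)
    (α β : Fin k → ℝ) (hα : ∀ i, 0 ≤ α i) (hβ : ∀ j, 0 ≤ β j)
    (x y : Fin k → ℝ) (hx : ∀ i, 0 < x i) (hy : ∀ j, 0 < y j)
    (hxsum : ∑ i, x i = 1) (hysum : ∑ j, y j = 1)
    (π : Fin k → Fin k → ℝ) (hπ : ∀ i j, π i j = α i + β j)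
    (hπpos : ∀ i j, 0 < π i j)
    (Q : Fin k → Fin k → ℝ → ℝ)
    (hQ : ∀ i j t, Q i j t = x i * y j * (1 - Real.exp (-π i j * t))) :
    (∀ i j, Q i j 0 = 0) ∧
    (∀ i j t, HasDerivAt (Q i j)
      (π i j * (x i - ∑ j', Q i j' t) * (y j - ∑ i', Q i' j t)
        / (1 - ∑ i', ∑ j', Q i' j' t)) t) ∧
    (∀ i j, Tendsto (Q i j) atTop (nhds (x i * y j))) := by
  have hne : (univ : Finset (Fin k)).Nonempty := ⟨⟨0, hk⟩, mem_univ _⟩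
  set A : ℝ → ℝ := fun t => ∑ i, x i * Real.exp (-α i * t) with hAdef
  set B : ℝ → ℝ := fun t => ∑ j, y j * Real.exp (-β j * t) with hBdef
  have hApos : ∀ t, 0 < A t := fun t =>
    Finset.sum_pos (fun i _ => mul_pos (hx i) (Real.exp_pos _)) hne
  have hBpos : ∀ t, 0 < B t := fun t =>
    Finset.sum_pos (fun j _ => mul_pos (hy j) (Real.exp_pos _)) hne
  have hexp : ∀ (i j : Fin k) (t : ℝ),
      Real.exp (-α i * t) * Real.exp (-β j * t) = Real.exp (-π i j * t) := by
    intro i j t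
    rw [← Real.exp_add, hπ]
    ring_nf
  have hrow : ∀ i t, x i - ∑ j', Q i j' t = x i * Real.exp (-α i * t) * B t := by
    intro i t
    have expand : ∑ j', Q i j' t
        = (∑ j', x i * y j') - ∑ j', x i * (y j' * Real.exp (-β j' * t)) * Real.exp (-α i * t) := by
      rw [← Finset.sum_sub_distrib]
      refine Finset.sum_congr rfl fun j' _ => ?_
      rw [hQ, ← hexp i j' t]; ring
    have h1 : ∑ j', x i * y j' = x i := by rw [← Finset.mul_sum, hysum, mul_one]
    rw [expand, h1, sub_sub_cancel, hBdef]
    rw [Finset.mul_sum]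
    exact Finset.sum_congr rfl fun j' _ => by ring
  have hcol : ∀ j t, y j - ∑ i', Q i' j t = y j * Real.exp (-β j * t) * A t := by
    intro j t
    have expand : ∑ i', Q i' j t
        = (∑ i', x i' * y j) - ∑ i', y j * (x i' * Real.exp (-α i' * t)) * Real.exp (-β j * t) := by
      rw [← Finset.sum_sub_distrib]
      refine Finset.sum_congr rfl fun i' _ => ?_
      rw [hQ, ← hexp i' j t]; ring
    have h1 : ∑ i', x i' * y j = y j := by rw [← Finset.sum_mul, hxsum, one_mul]
    rw [expand, h1, sub_sub_cancel, hAdef]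
    rw [Finset.mul_sum]
    exact Finset.sum_congr rfl fun i' _ => by ring
  have htot : ∀ t, 1 - ∑ i', ∑ j', Q i' j' t = A t * B t := by
    intro t
    have expand : ∑ i', ∑ j', Q i' j' t
        = (∑ i', ∑ j', x i' * y j')
          - ∑ i', ∑ j', (x i' * Real.exp (-α i' * t)) * (y j' * Real.exp (-β j' * t)) := by
      rw [← Finset.sum_sub_distrib]
      refine Finset.sum_congr rfl fun i' _ => ?_
      rw [← Finset.sum_sub_distrib]
      refine Finset.sum_congr rfl fun j' _ => ?_
      rw [hQ, ← hexp i' j' t]; ring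
    have h1 : ∑ i', ∑ j', x i' * y j' = 1 := by
      simp only [← Finset.mul_sum, hysum, mul_one]; exact hxsum
    rw [expand, h1, sub_sub_cancel, hAdef, hBdef, Finset.sum_mul_sum]
  refine ⟨?_, ?_, ?_⟩
  · intro i j
    simp [hQ]
  · intro i j t
    have hd : HasDerivAt (Q i j) (x i * y j * (π i j * Real.exp (-π i j * t))) t := by
      have h1 : HasDerivAt (fun s : ℝ => -π i j * s) (-π i j) t := by
        simpa using (hasDerivAt_id t).const_mul (-π i j)
      have h2 := h1.exp
      have h3 := (h2.const_sub 1).const_mul (x i * y j)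
      have heq : (∀ s, Q i j s = x i * y j * (1 - Real.exp (-π i j * s))) := hQ i j
      have := h3.congr_of_eventuallyEq (Eventually.of_forall fun s => (heq s))
      exact this.congr_deriv (by ring)
    convert hd using 1
    rw [hrow, hcol, htot]
    have hAne := (hApos t).ne'
    have hBne := (hBpos t).ne'
    have hAne' := (hApos t).ne'
    have hexp' : Real.exp (-(α i * t)) * Real.exp (-(β j * t)) = Real.exp (-(π i j * t)) := by
      rw [← Real.exp_add, hπ]; ring_nf
    rw [div_eq_iff (mul_ne_zero hAne hBne)]
    linear_combination (π i j * x i * y j * A t * B t) * hexp i j t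
  · intro i j
    have h1 : Tendsto (fun t : ℝ => -π i j * t) atTop atBot := by
      have h0 : Tendsto (fun t : ℝ => π i j * t) atTop atTop :=
        tendsto_id.const_mul_atTop (hπpos i j)
      simp only [neg_mul]
      exact tendsto_neg_atTop_atBot.comp h0
    have h2 : Tendsto (fun t => Real.exp (-π i j * t)) atTop (nhds 0) :=
      Real.tendsto_exp_atBot.comp h1
    have h3 : Tendsto (fun t => x i * y j * (1 - Real.exp (-π i j * t))) atTop
        (nhds (x i * y j)) := by
      have hsub : Tendsto (fun t => (1 : ℝ) - Real.exp (-π i j * t)) atTop (nhds (1 - 0)) :=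
        (tendsto_const_nhds (x := (1 : ℝ))).sub h2
      have := hsub.const_mul (x i * y j)
      simpa using this
    exact h3.congr (fun t => (hQ i j t).symm)
end

section
/- Let A_i(t) = X_i(t)/Z(t) and B_j(t) = Y_j(t)/Z(t) where X, Y, Z arise from a solution of the fluid limit ODE with Z(t) > 0 (as in the Lotka–Volterra formulation). Then Z'(t) = −Z(t)·A(t)^T Π B(t), and A, B satisfy the replicator equations A_i'(t) = −A_i(t)[(ΠB(t))_i − A(t)^T Π B(t)], B_j'(t) = −B_j(t)[(Π^T A(t))_j − A(t)^T Π B(t)]. -/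
open Finset

/-- From the Lotka–Volterra formulation, the frequencies `A = X/Z`, `B = Y/Z`
solve the replicator equations, and `Z' = −Z·AᵀΠB`. -/
theorem lotka_volterra_to_replicator (k : ℕ) (hk : 1 ≤ k)
    (π : Fin k → Fin k → ℝ) (hπ : ∀ i j, 0 < π i j)
    (X Y : Fin k → ℝ → ℝ) (Z : ℝ → ℝ) (A B : Fin k → ℝ → ℝ)
    (hZ : ∀ t, Z t = ∑ i, X i t)
    (hZY : ∀ t, Z t = ∑ j, Y j t)
    (hZpos : ∀ t, 0 < Z t)
    (hXode : ∀ i t, HasDerivAt (X i) (-(X i t / Z t) * ∑ j, π i j * Y j t) t)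
    (hYode : ∀ j t, HasDerivAt (Y j) (-(Y j t / Z t) * ∑ i, π i j * X i t) t)
    (hA : ∀ i t, A i t = X i t / Z t)
    (hB : ∀ j t, B j t = Y j t / Z t) :
    (∀ t, HasDerivAt Z (-(Z t) * ∑ i, ∑ j, π i j * A i t * B j t) t) ∧
    (∀ i t, HasDerivAt (A i)
      (-(A i t) * ((∑ j, π i j * B j t) - ∑ i', ∑ j, π i' j * A i' t * B j t)) t) ∧
    (∀ j t, HasDerivAt (B j)
      (-(B j t) * ((∑ i, π i j * A i t) - ∑ i, ∑ j', π i j' * A i t * B j' t)) t) := by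
  have hZne : ∀ t, Z t ≠ 0 := fun t => (hZpos t).ne'
  -- key sum identities
  have key1 : ∀ t, ∑ i, ∑ j, π i j * A i t * B j t
      = (∑ i, X i t * ∑ j, π i j * Y j t) / (Z t) ^ 2 := by
    intro t
    rw [Finset.sum_div]
    refine Finset.sum_congr rfl fun i _ => ?_
    rw [Finset.mul_sum, Finset.sum_div]
    refine Finset.sum_congr rfl fun j _ => ?_
    rw [hA, hB]
    field_simp
  have key2 : ∀ i t, ∑ j, π i j * B j t = (∑ j, π i j * Y j t) / Z t := by
    intro i t
    rw [Finset.sum_div]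
    refine Finset.sum_congr rfl fun j _ => ?_
    rw [hB]; ring
  have key3 : ∀ j t, ∑ i, π i j * A i t = (∑ i, π i j * X i t) / Z t := by
    intro j t
    rw [Finset.sum_div]
    refine Finset.sum_congr rfl fun i _ => ?_
    rw [hA]; ring
  -- derivative of Z
  have hsum : ∀ t, HasDerivAt Z (∑ i, -(X i t / Z t) * ∑ j, π i j * Y j t) t := by
    intro t
    have h := HasDerivAt.fun_sum (fun i (_ : i ∈ Finset.univ) => hXode i t)
    exact h.congr_of_eventuallyEq (Filter.Eventually.of_forall fun s => hZ s)
  have hZ' : ∀ t, HasDerivAt Z (-(Z t) * ∑ i, ∑ j, π i j * A i t * B j t) t := by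
    intro t
    have : ∑ i, -(X i t / Z t) * ∑ j, π i j * Y j t
        = -(Z t) * ∑ i, ∑ j, π i j * A i t * B j t := by
      rw [key1 t, Finset.sum_congr rfl
        (fun i (_ : i ∈ Finset.univ) =>
          show -(X i t / Z t) * ∑ j, π i j * Y j t
            = (X i t * ∑ j, π i j * Y j t) * (-(Z t)⁻¹) by ring),
        ← Finset.sum_mul]
      have h0 := hZne t
      field_simp
    exact this ▸ hsum t
  refine ⟨hZ', fun i t => ?_, fun j t => ?_⟩
  · have h := (hXode i t).fun_div (hZ' t) (hZne t)
    have hfun : (fun t => X i t / Z t) = A i := by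
      funext s; rw [hA]
    rw [hfun] at h
    refine h.congr_deriv ?_
    rw [key1 t, key2 i t, hA]
    have h0 := hZne t
    field_simp
    ring
  · have h := (hYode j t).fun_div (hZ' t) (hZne t)
    have hfun : (fun t => Y j t / Z t) = B j := by
      funext s; rw [hB]
    rw [hfun] at h
    refine h.congr_deriv ?_
    rw [key1 t, key3 j t, hB]
    have h0 := hZne t
    field_simp
    ring
end

section
/- Consider the scalar ODE A_1'(t) = (π_22 − π_12) A_1(t)(1 − A_1(t))^2 with A_1(0) = x_1 ∈ (0,1) and π_22 > π_12 > 0 (the case γ = 1). Then for all t ≥ 0, A_1(t) ∈ (0,1) and the implicit formula [(1−x_1)A_1(t)] / [x_1(1 − A_1(t))] · exp{1/(1−A_1(t)) − 1/(1−x_1)} = e^{(π_22 − π_12)t} holds; moreover A_1(t) → 1 as t → ∞. -/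
open Real Filter

/-- Auxiliary function `G(a) = log a - log(1-a) + 1/(1-a)`. -/
noncomputable def Gfun (a : ℝ) : ℝ := Real.log a - Real.log (1 - a) + (1 - a)⁻¹

lemma Gfun_hasDerivAt {a : ℝ} (h0 : 0 < a) (h1 : a < 1) :
    HasDerivAt Gfun (a⁻¹ + (1 - a)⁻¹ + ((1 - a) ^ 2)⁻¹) a := by
  have hne : a ≠ 0 := h0.ne'
  have hpos : (0:ℝ) < 1 - a := by linarith
  have hne1 : (1 - a) ≠ 0 := hpos.ne'
  have d1 : HasDerivAt Real.log a⁻¹ a := Real.hasDerivAt_log hne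
  have dsub : HasDerivAt (fun x : ℝ => 1 - x) (-1) a := by
    simpa using (hasDerivAt_id a).const_sub 1
  have d2 : HasDerivAt (fun x : ℝ => Real.log (1 - x)) ((1 - a)⁻¹ * (-1)) a :=
    (Real.hasDerivAt_log hne1).comp a dsub
  have d3 : HasDerivAt (fun x : ℝ => (1 - x)⁻¹) (-(-1) / (1 - a) ^ 2) a := dsub.inv hne1
  have := (d1.sub d2).add d3
  exact this.congr_deriv (by ring)

/-- The case `γ = 1`: the scalar ODE `A₁' = (π₂₂ − π₁₂)A₁(1−A₁)²` stays in
`(0,1)`, satisfies the implicit exponential formula, and `A₁(t) → 1`. -/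
theorem gamma_one_case (π₁₂ π₂₂ x₁ : ℝ)
    (hπ₁₂ : 0 < π₁₂) (hπ : π₁₂ < π₂₂) (hx₁ : x₁ ∈ Set.Ioo (0:ℝ) 1)
    (A₁ : ℝ → ℝ) (hA0 : A₁ 0 = x₁)
    (hode : ∀ t, 0 ≤ t →
      HasDerivAt A₁ ((π₂₂ - π₁₂) * A₁ t * (1 - A₁ t) ^ 2) t) :
    (∀ t, 0 ≤ t → A₁ t ∈ Set.Ioo (0:ℝ) 1 ∧
      (1 - x₁) * A₁ t / (x₁ * (1 - A₁ t))
        * Real.exp (1 / (1 - A₁ t) - 1 / (1 - x₁))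
        = Real.exp ((π₂₂ - π₁₂) * t)) ∧
    Tendsto A₁ atTop (nhds 1) := by
  set c : ℝ := π₂₂ - π₁₂ with hc
  have hcpos : 0 < c := sub_pos.mpr hπ
  clear_value c
  have hx0 : 0 < x₁ := hx₁.1
  have h1x : (0:ℝ) < 1 - x₁ := by linarith [hx₁.2]
  -- the key conservation law on any interval where the solution stays in (0,1)
  have key : ∀ T, 0 ≤ T → (∀ s ∈ Set.Icc (0:ℝ) T, A₁ s ∈ Set.Ioo (0:ℝ) 1) →
      Gfun (A₁ T) = Gfun x₁ + c * T := by
    intro T hT hmem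
    have hderiv : ∀ s ∈ Set.Icc (0:ℝ) T,
        HasDerivAt (fun t => Gfun (A₁ t) - c * t) 0 s := by
      intro s hs
      obtain ⟨h0, h1⟩ := hmem s hs
      have h1a : (0:ℝ) < 1 - A₁ s := by linarith
      have hA := hode s hs.1
      have hG := (Gfun_hasDerivAt h0 h1).comp s hA
      have hlin : HasDerivAt (fun t : ℝ => c * t) c s := by
        simpa using (hasDerivAt_id s).const_mul c
      have h := hG.sub hlin
      have heq : ((A₁ s)⁻¹ + (1 - A₁ s)⁻¹ + ((1 - A₁ s) ^ 2)⁻¹) *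
          (c * A₁ s * (1 - A₁ s) ^ 2) - c = 0 := by
        field_simp
        ring
      rw [heq] at h
      exact h
    have hcont : ContinuousOn (fun t => Gfun (A₁ t) - c * t) (Set.Icc 0 T) :=
      fun s hs => ((hderiv s hs).continuousAt).continuousWithinAt
    have hzero := constant_of_has_deriv_right_zero hcont
      (fun s hs => ((hderiv s (Set.mem_Icc_of_Ico hs)).hasDerivWithinAt))
      T (Set.right_mem_Icc.mpr hT)
    simp only [hA0, mul_zero, sub_zero] at hzero
    linarith [hzero]
  have hcontA : ∀ t, 0 ≤ t → ContinuousAt A₁ t := fun t ht => (hode t ht).continuousAt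
  -- invariance of (0,1)
  have hinv : ∀ t, 0 ≤ t → A₁ t ∈ Set.Ioo (0:ℝ) 1 := by
    by_contra hbad
    push_neg at hbad
    obtain ⟨t₀, ht₀, hmem⟩ := hbad
    set Tset : Set ℝ := Set.Ici 0 ∩ A₁ ⁻¹' (Set.Ioo (0:ℝ) 1)ᶜ with hTdef
    have hne : Tset.Nonempty := ⟨t₀, ht₀, hmem⟩
    have hbdd : BddBelow Tset := ⟨0, fun s hs => hs.1⟩
    have hclosed : IsClosed Tset := by
      have hContOn : ContinuousOn A₁ (Set.Ici 0) :=
        fun s hs => (hcontA s hs).continuousWithinAt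
      exact hContOn.preimage_isClosed_of_isClosed isClosed_Ici isOpen_Ioo.isClosed_compl
    set τ := sInf Tset with hτdef
    have hτmem : τ ∈ Tset := hclosed.csInf_mem hne hbdd
    have hτ0 : 0 ≤ τ := hτmem.1
    have hτnot : A₁ τ ∉ Set.Ioo (0:ℝ) 1 := hτmem.2
    have hτpos : 0 < τ := by
      rcases hτ0.lt_or_eq with h | h
      · exact h
      · exact absurd (by rw [← h, hA0]; exact hx₁) hτnot
    have hbefore : ∀ s, 0 ≤ s → s < τ → A₁ s ∈ Set.Ioo (0:ℝ) 1 := by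
      intro s hs hsτ
      by_contra h
      exact absurd (csInf_le hbdd ⟨hs, h⟩) (not_le.mpr hsτ)
    have hlim : Tendsto A₁ (nhdsWithin τ (Set.Iio τ)) (nhds (A₁ τ)) :=
      (hcontA τ hτ0).tendsto.mono_left nhdsWithin_le_nhds
    have hev : ∀ᶠ s in nhdsWithin τ (Set.Iio τ), 0 ≤ s ∧ s < τ := by
      filter_upwards [Ioo_mem_nhdsLT_of_mem (Set.mem_Ioc.mpr ⟨hτpos, le_refl τ⟩)] with s hs
      exact ⟨hs.1.le, hs.2⟩
    have h01 : A₁ τ ∈ Set.Icc (0:ℝ) 1 := by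
      constructor
      · exact ge_of_tendsto hlim (by
          filter_upwards [hev] with s hs
          exact (hbefore s hs.1 hs.2).1.le)
      · exact le_of_tendsto hlim (by
          filter_upwards [hev] with s hs
          exact (hbefore s hs.1 hs.2).2.le)
    have hGs : ∀ s, 0 ≤ s → s < τ → Gfun (A₁ s) = Gfun x₁ + c * s := fun s hs hsτ =>
      key s hs (fun r hr => hbefore r hr.1 (lt_of_le_of_lt hr.2 hsτ))
    have hcase : A₁ τ = 0 ∨ A₁ τ = 1 := by
      rcases h01.1.eq_or_lt with h | h
      · exact Or.inl h.symm
      · rcases h01.2.eq_or_lt with h' | h'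
        · exact Or.inr h'
        · exact absurd ⟨h, h'⟩ hτnot
    rcases hcase with h0 | h1
    · -- A₁ τ = 0 : contradiction, the solution is bounded below near τ
      set ε : ℝ := Real.exp (Gfun x₁ - Real.log 2 - 2) with hεdef
      have hεpos : 0 < ε := Real.exp_pos _
      have hlow : ∀ s, 0 ≤ s → s < τ → A₁ s ≤ 1/2 → ε ≤ A₁ s := by
        intro s hs hsτ hhalf
        obtain ⟨ha0, ha1⟩ := hbefore s hs hsτ
        have h1a : (1:ℝ)/2 ≤ 1 - A₁ s := by linarith
        have h1apos : (0:ℝ) < 1 - A₁ s := by linarith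
        have hGv := hGs s hs hsτ
        have hlogb : Real.log (1/2) ≤ Real.log (1 - A₁ s) :=
          Real.log_le_log (by norm_num) h1a
        have hinvb : (1 - A₁ s)⁻¹ ≤ 2 := by
          rw [inv_le_comm₀ h1apos (by norm_num)]
          linarith
        have hloga : Gfun x₁ - Real.log 2 - 2 ≤ Real.log (A₁ s) := by
          have : Gfun (A₁ s) = Real.log (A₁ s) - Real.log (1 - A₁ s) + (1 - A₁ s)⁻¹ := rfl
          have hl2 : Real.log (1/2) = -Real.log 2 := by
            rw [one_div, Real.log_inv]
          nlinarith [mul_nonneg hcpos.le hs]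
        calc ε ≤ Real.exp (Real.log (A₁ s)) := Real.exp_le_exp.mpr hloga
          _ = A₁ s := Real.exp_log ha0
      have hevsmall : ∀ᶠ s in nhdsWithin τ (Set.Iio τ), A₁ s < min ε (1/2) := by
        have : Tendsto A₁ (nhdsWithin τ (Set.Iio τ)) (nhds 0) := h0 ▸ hlim
        exact this.eventually_lt_const (by positivity)
      have : ∀ᶠ s in nhdsWithin τ (Set.Iio τ), False := by
        filter_upwards [hev, hevsmall] with s hs hsm
        have h2 : A₁ s ≤ 1/2 := le_of_lt (lt_of_lt_of_le hsm (min_le_right _ _))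
        have := hlow s hs.1 hs.2 h2
        have hlt : A₁ s < ε := lt_of_lt_of_le hsm (min_le_left _ _)
        linarith
      obtain ⟨s, hs⟩ := this.exists
      exact hs
    · -- A₁ τ = 1 : contradiction, the solution is bounded away from 1 near τ
      set M : ℝ := max (Gfun x₁ + c * τ + Real.log 2) 1 with hMdef
      have hMpos : (0:ℝ) < M := lt_of_lt_of_le one_pos (le_max_right _ _)
      have hupp : ∀ s, 0 ≤ s → s < τ → 1/2 ≤ A₁ s → A₁ s ≤ 1 - M⁻¹ := by
        intro s hs hsτ hhalf
        obtain ⟨ha0, ha1⟩ := hbefore s hs hsτ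
        have h1apos : (0:ℝ) < 1 - A₁ s := by linarith
        have hGv := hGs s hs hsτ
        have hloga : -Real.log 2 ≤ Real.log (A₁ s) := by
          have := Real.log_le_log (by norm_num : (0:ℝ) < 1/2) hhalf
          rw [one_div, Real.log_inv] at this
          linarith
        have hlogb : Real.log (1 - A₁ s) ≤ 0 :=
          Real.log_nonpos h1apos.le (by linarith)
        have hinvM : (1 - A₁ s)⁻¹ ≤ M := by
          have hGe : Gfun (A₁ s) = Real.log (A₁ s) - Real.log (1 - A₁ s) + (1 - A₁ s)⁻¹ := rfl
          have h1 : (1 - A₁ s)⁻¹ ≤ Gfun x₁ + c * τ + Real.log 2 := by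
            have hcs : c * s ≤ c * τ := by nlinarith
            nlinarith
          exact le_trans h1 (le_max_left _ _)
        have : M⁻¹ ≤ 1 - A₁ s := by
          rw [inv_le_comm₀ hMpos h1apos]
          exact hinvM
        linarith
      have hevbig : ∀ᶠ s in nhdsWithin τ (Set.Iio τ), max (1 - M⁻¹) (1/2) < A₁ s := by
        have hlim1 : Tendsto A₁ (nhdsWithin τ (Set.Iio τ)) (nhds 1) := h1 ▸ hlim
        apply hlim1.eventually_const_lt
        apply max_lt
        · have : (0:ℝ) < M⁻¹ := by positivity
          linarith
        · norm_num
      have : ∀ᶠ s in nhdsWithin τ (Set.Iio τ), False := by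
        filter_upwards [hev, hevbig] with s hs hsb
        have h2 : 1/2 ≤ A₁ s := le_of_lt (lt_of_le_of_lt (le_max_right _ _) hsb)
        have := hupp s hs.1 hs.2 h2
        have := lt_of_le_of_lt (le_max_left (1 - M⁻¹) (1/2)) hsb
        linarith
      obtain ⟨s, hs⟩ := this.exists
      exact hs
  -- conservation law holds for all t ≥ 0
  have hGall : ∀ t, 0 ≤ t → Gfun (A₁ t) = Gfun x₁ + c * t :=
    fun t ht => key t ht (fun s hs => hinv s hs.1)
  constructor
  · intro t ht
    refine ⟨hinv t ht, ?_⟩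
    obtain ⟨ha0, ha1⟩ := hinv t ht
    have h1a : (0:ℝ) < 1 - A₁ t := by linarith
    have hG := hGall t ht
    have hratio : (1 - x₁) * A₁ t / (x₁ * (1 - A₁ t)) =
        Real.exp (Real.log (A₁ t) - Real.log (1 - A₁ t) - Real.log x₁ + Real.log (1 - x₁)) := by
      rw [Real.exp_add, Real.exp_sub, Real.exp_sub, Real.exp_log ha0, Real.exp_log h1a,
        Real.exp_log hx0, Real.exp_log h1x]
      field_simp
    rw [hratio, ← Real.exp_add]
    congr 1
    have hGe : Gfun (A₁ t) = Real.log (A₁ t) - Real.log (1 - A₁ t) + (1 - A₁ t)⁻¹ := rfl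
    have hGx : Gfun x₁ = Real.log x₁ - Real.log (1 - x₁) + (1 - x₁)⁻¹ := rfl
    simp only [one_div]
    rw [hc] at hG ⊢
    linarith
  · -- the limit
    have hub : ∀ t, 0 ≤ t → Gfun x₁ + c * t ≤ 2 * (1 - A₁ t)⁻¹ := by
      intro t ht
      obtain ⟨ha0, ha1⟩ := hinv t ht
      have h1a : (0:ℝ) < 1 - A₁ t := by linarith
      have hG := hGall t ht
      have hlog1 : Real.log (A₁ t) ≤ 0 := Real.log_nonpos ha0.le ha1.le
      have hlog2 : -Real.log (1 - A₁ t) ≤ (1 - A₁ t)⁻¹ - 1 := by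
        have h := Real.add_one_le_exp ((1 - A₁ t)⁻¹ - 1)
        have h2 : Real.log (1 - A₁ t) = -Real.log ((1 - A₁ t)⁻¹) := by
          rw [Real.log_inv]; ring
        have h3 : Real.log ((1 - A₁ t)⁻¹) ≤ (1 - A₁ t)⁻¹ - 1 := by
          have := Real.log_le_sub_one_of_pos (x := (1 - A₁ t)⁻¹) (by positivity)
          exact this
        rw [h2]
        linarith
      have hGe : Gfun (A₁ t) = Real.log (A₁ t) - Real.log (1 - A₁ t) + (1 - A₁ t)⁻¹ := rfl
      linarith
    have htop : Tendsto (fun t : ℝ => Gfun x₁ + c * t) atTop atTop := by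
      apply tendsto_atTop_add_const_left
      exact Tendsto.const_mul_atTop hcpos tendsto_id
    have hpos_ev : ∀ᶠ t in atTop, (0:ℝ) < Gfun x₁ + c * t := htop.eventually_gt_atTop 0
    have hbound : ∀ᶠ t in atTop, 1 - A₁ t ≤ 2 * (Gfun x₁ + c * t)⁻¹ := by
      filter_upwards [hpos_ev, eventually_ge_atTop (0:ℝ)] with t hpt ht
      obtain ⟨ha0, ha1⟩ := hinv t ht
      have h1a : (0:ℝ) < 1 - A₁ t := by linarith
      have h := hub t ht
      have h2 : (Gfun x₁ + c * t) * (1 - A₁ t) ≤ 2 := by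
        have h3 := mul_le_mul_of_nonneg_right h h1a.le
        have h4 : (1 - A₁ t)⁻¹ * (1 - A₁ t) = 1 := inv_mul_cancel₀ h1a.ne'
        nlinarith
      rw [show (2:ℝ) * (Gfun x₁ + c * t)⁻¹ = 2 / (Gfun x₁ + c * t) by ring,
        le_div_iff₀ hpt]
      nlinarith
    have hnonneg : ∀ᶠ t in atTop, (0:ℝ) ≤ 1 - A₁ t := by
      filter_upwards [eventually_ge_atTop (0:ℝ)] with t ht
      have := (hinv t ht).2
      linarith
    have hrhs : Tendsto (fun t : ℝ => 2 * (Gfun x₁ + c * t)⁻¹) atTop (nhds 0) := by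
      have := htop.inv_tendsto_atTop
      have h2 := this.const_mul (2:ℝ)
      simpa using h2
    have hsq : Tendsto (fun t => 1 - A₁ t) atTop (nhds 0) :=
      tendsto_of_tendsto_of_tendsto_of_le_of_le' tendsto_const_nhds hrhs hnonneg hbound
    have := tendsto_const_nhds.sub hsq (f := fun _ : ℝ => (1:ℝ))
    simpa using this
end

section
/- Let θ_1 > 0 and x_1 ∈ (0,1). Then ∫_0^∞ (1 + y/(x_1 θ_1))^{−θ_1 − 1} e^{−y/(1−x_1)} dy < x_1(1 − x_1). -/
open Real MeasureTheory
open Set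

lemma aux_int {c p : ℝ} (hc : 0 < c) (hp : 1 < p) :
    IntegrableOn (fun y => (1 + y / c) ^ (-p)) (Ioi (0:ℝ)) ∧
    ∫ y in Ioi (0:ℝ), (1 + y / c) ^ (-p) = c / (p - 1) := by
  have hmp : (-p) < -1 := by linarith
  have hfun : EqOn (fun y => (1 + y / c) ^ (-p))
      (fun y => (c + y) ^ (-p) * c ^ p) (Ioi (0:ℝ)) := by
    intro y hy
    have hy0 : (0:ℝ) < y := hy
    have h1 : 1 + y / c = (c + y) / c := by field_simp
    simp only [h1, Real.div_rpow (by positivity : (0:ℝ) ≤ c + y) hc.le,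
      Real.rpow_neg hc.le p]
    field_simp
  have hint0 : IntegrableOn (fun x => x ^ (-p)) (Ioi c) :=
    integrableOn_Ioi_rpow_of_lt hmp hc
  have hcomp : IntegrableOn ((fun x => x ^ (-p)) ∘ (fun y => c + y)) (Ioi (0:ℝ)) := by
    have hpre : (fun y => c + y) ⁻¹' Ioi c = Ioi (0:ℝ) := by
      ext y; simp
    rw [← hpre]
    exact ((measurePreserving_add_left (volume : Measure ℝ) c).integrableOn_comp_preimage
      (measurableEmbedding_addLeft c)).2 hint0
  have hint1 : IntegrableOn (fun y => (c + y) ^ (-p) * c ^ p) (Ioi (0:ℝ)) :=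
    (hcomp.mul_const _)
  have hint : IntegrableOn (fun y => (1 + y / c) ^ (-p)) (Ioi (0:ℝ)) :=
    hint1.congr_fun hfun.symm measurableSet_Ioi
  refine ⟨hint, ?_⟩
  rw [setIntegral_congr_fun measurableSet_Ioi hfun]
  have hshift : ∫ y in Ioi (0:ℝ), (c + y) ^ (-p) = ∫ x in Ioi c, x ^ (-p) := by
    have h := (measurePreserving_add_left (volume : Measure ℝ) c).setIntegral_preimage_emb
      (measurableEmbedding_addLeft c) (fun x => x ^ (-p)) (Ioi c)
    have hpre : (fun y => c + y) ⁻¹' Ioi c = Ioi (0:ℝ) := by ext y; simp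
    rw [hpre] at h; exact h
  rw [integral_mul_const, hshift, integral_Ioi_rpow_of_lt hmp hc]
  have h1 : c ^ (-p + 1) * c ^ p = c := by
    rw [← Real.rpow_add hc]; norm_num
  rw [div_mul_eq_mul_div, neg_mul, h1, show -p + 1 = -(p - 1) by ring, neg_div_neg_eq]


/-- Homogamy inequality in the case `π₁₁ = π₁₂ < π₂₂`:
`∫₀^∞ (1 + y/(x₁θ₁))^{−θ₁−1} e^{−y/(1−x₁)} dy < x₁(1 − x₁)`. -/
theorem homogamy_integral_lt (θ₁ x₁ : ℝ) (hθ₁ : 0 < θ₁)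
    (hx₁ : x₁ ∈ Set.Ioo (0:ℝ) 1) :
    ∫ y in Set.Ioi (0:ℝ),
        (1 + y / (x₁ * θ₁)) ^ (-θ₁ - 1) * Real.exp (-y / (1 - x₁))
      < x₁ * (1 - x₁) := by
  obtain ⟨hx0, hx1⟩ := hx₁
  have h1x : (0:ℝ) < 1 - x₁ := by linarith
  set c : ℝ := x₁ * θ₁ with hc_def
  have hc : 0 < c := by positivity
  set s : ℝ := c / (1 - x₁) with hs_def
  have hs : 0 < s := by positivity
  set p : ℝ := θ₁ + 1 + s with hp_def
  have hp : 1 < p := by simp only [hp_def]; linarith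
  set f : ℝ → ℝ := fun y => (1 + y / c) ^ (-θ₁ - 1) * Real.exp (-y / (1 - x₁)) with hf_def
  set g : ℝ → ℝ := fun y => (1 + y / c) ^ (-p) with hg_def
  obtain ⟨hgint, hgval⟩ := aux_int hc hp
  -- pointwise strict inequality on Ioi 0
  have hlt : ∀ y ∈ Ioi (0:ℝ), f y < g y := by
    intro y hy
    have hy0 : (0:ℝ) < y := hy
    have hb : (0:ℝ) < 1 + y / c := by positivity
    have hb1 : (1:ℝ) < 1 + y / c := by
      have : 0 < y / c := by positivity
      linarith
    have hlog : Real.log (1 + y / c) < y / c :=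
      lt_of_lt_of_le (Real.log_lt_sub_one_of_pos hb (ne_of_gt hb1)) (le_of_eq (by ring))
    have hexp : Real.exp (-y / (1 - x₁)) < (1 + y / c) ^ (-s) := by
      rw [Real.rpow_def_of_pos hb, Real.exp_lt_exp, neg_div]
      have h2 : s * Real.log (1 + y / c) < s * (y / c) :=
        (mul_lt_mul_iff_right₀ hs).2 hlog
      have h3 : s * (y / c) = y / (1 - x₁) := by
        rw [hs_def]; field_simp
      have h4 : Real.log (1 + y / c) * (-s) = -(s * Real.log (1 + y / c)) := by ring
      rw [h4]
      linarith
    have hsplit : g y = (1 + y / c) ^ (-θ₁ - 1) * (1 + y / c) ^ (-s) := by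
      rw [hg_def]
      show (1 + y / c) ^ (-p) = _
      rw [show -p = (-θ₁ - 1) + (-s) by rw [hp_def]; ring, Real.rpow_add hb]
    rw [hsplit, hf_def]
    exact mul_lt_mul_of_pos_left hexp (Real.rpow_pos_of_pos hb _)
  have hle : ∀ᵐ y ∂(volume.restrict (Ioi (0:ℝ))), f y ≤ g y := by
    filter_upwards [ae_restrict_mem measurableSet_Ioi] with y hy
    exact (hlt y hy).le
  have hfmeas : AEStronglyMeasurable f (volume.restrict (Ioi (0:ℝ))) := by
    have hcont : ContinuousOn f (Ioi (0:ℝ)) := by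
      apply ContinuousOn.mul
      · apply ContinuousOn.rpow_const
        · exact (continuous_const.add (continuous_id.div_const c)).continuousOn
        · intro y hy
          have hy0 : (0:ℝ) < y := hy
          left
          have : (0:ℝ) < 1 + y / c := by positivity
          simpa using this.ne'
      · exact (Real.continuous_exp.comp ((continuous_id.neg).div_const _)).continuousOn
    exact hcont.aestronglyMeasurable measurableSet_Ioi
  have hfint : IntegrableOn f (Ioi (0:ℝ)) := by
    refine hgint.mono' hfmeas ?_
    filter_upwards [hle, ae_restrict_mem measurableSet_Ioi] with y hy hy'
    have : 0 ≤ f y := by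
      have hb : (0:ℝ) < 1 + y / c := by
        have : (0:ℝ) < y := hy'
        positivity
      positivity
    rwa [Real.norm_eq_abs, abs_of_nonneg this]
  -- strict inequality of integrals
  have hpos : 0 < ∫ y in Ioi (0:ℝ), (g y - f y) := by
    rw [setIntegral_pos_iff_support_of_nonneg_ae]
    · have hsub : Ioi (0:ℝ) ⊆ Function.support (fun y => g y - f y) ∩ Ioi (0:ℝ) := by
        intro y hy
        refine ⟨?_, hy⟩
        have : g y - f y ≠ 0 := sub_ne_zero.2 (hlt y hy).ne'
        exact this
      calc (0 : ENNReal) < volume (Ioi (0:ℝ)) := by simp [Real.volume_Ioi]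
        _ ≤ _ := measure_mono hsub
    · filter_upwards [hle] with y hy
      simp only [Pi.zero_apply, sub_nonneg]
      exact hy
    · exact hgint.sub hfint
  rw [integral_sub hgint hfint] at hpos
  have : ∫ y in Ioi (0:ℝ), f y < ∫ y in Ioi (0:ℝ), g y := by linarith
  have hval : c / (p - 1) = x₁ * (1 - x₁) := by
    rw [hp_def, hs_def, hc_def]
    field_simp [hθ₁.ne']
    have hθ : θ₁ * θ₁⁻¹ = 1 := mul_inv_cancel₀ hθ₁.ne'
    linear_combination hθ
  calc ∫ y in Ioi (0:ℝ), (1 + y / (x₁ * θ₁)) ^ (-θ₁ - 1) * Real.exp (-y / (1 - x₁))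
      = ∫ y in Ioi (0:ℝ), f y := rfl
    _ < ∫ y in Ioi (0:ℝ), g y := this
    _ = x₁ * (1 - x₁) := by rw [hgval, hval]
end

section
/- Let 0 < x_1 < 1, γ < 0, θ_2 > 0, θ_1 < −1 with θ_1 + θ_2 < 0 and (1−γ)θ_2 = γθ_1. Then θ_1 γ ∫_0^{−x_1/γ} (1 + γy/x_1)^{−(θ_1+1)} (1 + (1−γ)y/(1−x_1))^{−(θ_2+1)} dy < x_1(1 − x_1). -/
open Real MeasureTheory

private lemma rpow_succ_of_nonneg {x p : ℝ} (hx : 0 ≤ x) (hp : 0 < p) :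
    x ^ (p + 1) = x * x ^ p := by
  rcases hx.eq_or_lt with h | h
  · rw [← h, Real.zero_rpow (by positivity), Real.zero_rpow hp.ne', mul_zero]
  · rw [Real.rpow_add h, Real.rpow_one, mul_comm]

/-- Homogamy bound in the case `π₁₁ > π₁₂ > π₂₂` (`γ < 0`). -/
theorem homogamy_integral_neg_gamma (x₁ γ θ₁ θ₂ : ℝ)
    (hx₁ : x₁ ∈ Set.Ioo (0:ℝ) 1) (hγ : γ < 0)
    (hθ₂ : 0 < θ₂) (hθ₁ : θ₁ < -1) (hsum : θ₁ + θ₂ < 0)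
    (hrel : (1 - γ) * θ₂ = γ * θ₁) :
    θ₁ * γ * ∫ y in Set.Ioo (0:ℝ) (-x₁ / γ),
        (1 + γ * y / x₁) ^ (-(θ₁ + 1))
          * (1 + (1 - γ) * y / (1 - x₁)) ^ (-(θ₂ + 1))
      < x₁ * (1 - x₁) := by
  obtain ⟨hx0, hx1⟩ := hx₁
  have hx1' : 0 < 1 - x₁ := by linarith
  have hθ₁0 : θ₁ < 0 := by linarith
  have hγθ : 0 < γ * θ₁ := mul_pos_of_neg_of_neg hγ hθ₁0
  set s : ℝ := -x₁ / γ with hsdef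
  have hs : 0 < s := div_pos_of_neg_of_neg (by linarith) hγ
  have hγs : γ * s = -x₁ := by
    rw [hsdef]; field_simp [hγ.ne]
  set g : ℝ → ℝ := fun y =>
    (1 + γ * y / x₁) ^ (-(θ₁ + 1)) * (1 + (1 - γ) * y / (1 - x₁)) ^ (-(θ₂ + 1))
    with hgdef
  -- positivity facts for the bases
  have hu_nonneg : ∀ y ∈ Set.Icc (0:ℝ) s, 0 ≤ 1 + γ * y / x₁ := by
    intro y hy
    have h1 : γ * s ≤ γ * y := mul_le_mul_of_nonpos_left hy.2 hγ.le
    have h2 : -1 ≤ γ * y / x₁ := by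
      rw [le_div_iff₀ hx0]; nlinarith
    linarith
  have hu_pos : ∀ y ∈ Set.Ico (0:ℝ) s, 0 < 1 + γ * y / x₁ := by
    intro y hy
    have h1 : γ * s < γ * y := by
      have := hy.2
      nlinarith
    have h2 : -1 < γ * y / x₁ := by
      rw [lt_div_iff₀ hx0]; nlinarith
    linarith
  have hv_pos : ∀ y : ℝ, 0 ≤ y → 0 < 1 + (1 - γ) * y / (1 - x₁) := by
    intro y hy
    have : 0 ≤ (1 - γ) * y / (1 - x₁) :=
      div_nonneg (mul_nonneg (by linarith) hy) hx1'.le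
    linarith
  have hg_pos : ∀ y ∈ Set.Ioo (0:ℝ) s, 0 < g y := by
    intro y hy
    exact mul_pos (Real.rpow_pos_of_pos (hu_pos y ⟨hy.1.le, hy.2⟩) _)
      (Real.rpow_pos_of_pos (hv_pos y hy.1.le) _)
  -- continuity
  have hcontA : Continuous fun y : ℝ => (1 + γ * y / x₁) ^ (-(θ₁ + 1)) := by
    rw [continuous_iff_continuousAt]
    intro y
    have hcu : ContinuousAt (fun y : ℝ => 1 + γ * y / x₁) y := by fun_prop
    exact hcu.rpow_const (Or.inr (by linarith))
  have hcontB : ContinuousOn (fun y : ℝ =>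
      (1 + (1 - γ) * y / (1 - x₁)) ^ (-(θ₂ + 1))) (Set.Icc 0 s) := by
    intro y hy
    have hcv : ContinuousAt (fun y : ℝ => 1 + (1 - γ) * y / (1 - x₁)) y := by fun_prop
    exact (hcv.rpow_const (Or.inl (hv_pos y hy.1).ne')).continuousWithinAt
  have hgcont : ContinuousOn g (Set.Icc 0 s) := by
    rw [hgdef]; exact hcontA.continuousOn.mul hcontB
  -- derivative of F y = u^(-θ₁) * v^(-θ₂)
  have hθ₂' : θ₂ = γ * θ₁ / (1 - γ) := by
    rw [eq_div_iff (by linarith : (1:ℝ) - γ ≠ 0)]; linarith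
  have hderiv : ∀ y ∈ Set.Icc (0:ℝ) s,
      HasDerivAt (fun y : ℝ =>
        (1 + γ * y / x₁) ^ (-θ₁) * (1 + (1 - γ) * y / (1 - x₁)) ^ (-θ₂))
        (-(γ * θ₁ * (1 + y) / (x₁ * (1 - x₁)) * g y)) y := by
    intro y hy
    have hu' : HasDerivAt (fun y : ℝ => 1 + γ * y / x₁) (γ / x₁) y := by
      simpa using (((hasDerivAt_id y).const_mul γ).div_const x₁).const_add 1
    have hv' : HasDerivAt (fun y : ℝ => 1 + (1 - γ) * y / (1 - x₁))
        ((1 - γ) / (1 - x₁)) y := by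
      simpa using (((hasDerivAt_id y).const_mul (1 - γ)).div_const (1 - x₁)).const_add 1
    have h1 := hu'.rpow_const (Or.inr (by linarith : (1:ℝ) ≤ -θ₁))
    have h2 := hv'.rpow_const (p := -θ₂) (Or.inl (hv_pos y hy.1).ne')
    have hmul := h1.mul h2
    refine hmul.congr_deriv ?_
    symm
    have e1 : (1 + γ * y / x₁) ^ (-θ₁)
        = (1 + γ * y / x₁) * (1 + γ * y / x₁) ^ (-θ₁ - 1) := by
      have := rpow_succ_of_nonneg (hu_nonneg y hy) (show (0:ℝ) < -θ₁ - 1 by linarith)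
      rw [show -θ₁ - 1 + 1 = -θ₁ by ring] at this
      exact this
    have e2 : (1 + (1 - γ) * y / (1 - x₁)) ^ (-θ₂)
        = (1 + (1 - γ) * y / (1 - x₁)) * (1 + (1 - γ) * y / (1 - x₁)) ^ (-θ₂ - 1) := by
      rw [show -θ₂ = -θ₂ - 1 + 1 by ring, Real.rpow_add (hv_pos y hy.1), Real.rpow_one]
      ring
    rw [hgdef]
    simp only []
    rw [show -(θ₁ + 1) = -θ₁ - 1 by ring, show -(θ₂ + 1) = -θ₂ - 1 by ring, e1, e2]
    generalize (1 + γ * y / x₁) ^ (-θ₁ - 1) = A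
    generalize (1 + (1 - γ) * y / (1 - x₁)) ^ (-θ₂ - 1) = B
    field_simp
    linear_combination ((x₁ + γ * y) * A * B) * hrel
  -- FTC
  have huIcc : Set.uIcc (0:ℝ) s = Set.Icc 0 s := Set.uIcc_of_le hs.le
  have hGcont : ContinuousOn
      (fun y : ℝ => -(γ * θ₁ * (1 + y) / (x₁ * (1 - x₁)) * g y)) (Set.Icc 0 s) := by
    apply ContinuousOn.neg
    exact (((continuous_const.mul (continuous_const.add continuous_id)).div_const
      _).continuousOn.mul hgcont)
  have hGint : IntervalIntegrable
      (fun y : ℝ => -(γ * θ₁ * (1 + y) / (x₁ * (1 - x₁)) * g y)) volume 0 s := by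
    apply ContinuousOn.intervalIntegrable
    rwa [huIcc]
  have hFTC := intervalIntegral.integral_eq_sub_of_hasDerivAt
    (f := fun y : ℝ =>
      (1 + γ * y / x₁) ^ (-θ₁) * (1 + (1 - γ) * y / (1 - x₁)) ^ (-θ₂))
    (fun y hy => hderiv y (by rwa [huIcc] at hy)) hGint
  have hFs : (1 + γ * s / x₁) ^ (-θ₁) * (1 + (1 - γ) * s / (1 - x₁)) ^ (-θ₂) = 0 := by
    have hus : 1 + γ * s / x₁ = 0 := by
      rw [hγs]; field_simp; norm_num
    rw [hus, Real.zero_rpow (by linarith : -θ₁ ≠ 0), zero_mul]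
  have hF0 : (1 + γ * 0 / x₁) ^ (-θ₁) * (1 + (1 - γ) * 0 / (1 - x₁)) ^ (-θ₂) = 1 := by
    norm_num
  simp only [hFs, hF0] at hFTC
  -- hFTC : ∫ y in 0..s, -(γθ₁(1+y)/(x₁(1-x₁)) * g y) = 0 - 1
  have hxx : (0:ℝ) < x₁ * (1 - x₁) := mul_pos hx0 hx1'
  -- integrability of pieces
  have hii1 : IntervalIntegrable (fun y => θ₁ * γ * g y) volume 0 s := by
    apply ContinuousOn.intervalIntegrable
    rw [huIcc]; exact continuousOn_const.mul hgcont
  have hii2 : IntervalIntegrable (fun y => γ * θ₁ * y * g y) volume 0 s := by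
    apply ContinuousOn.intervalIntegrable
    rw [huIcc]
    exact ((continuous_const.mul continuous_id).continuousOn.mul hgcont)
  -- main identity
  have hI1 : ∫ y in (0:ℝ)..s, γ * θ₁ * (1 + y) * g y = x₁ * (1 - x₁) := by
    have hrw : ∫ y in (0:ℝ)..s, -(γ * θ₁ * (1 + y) / (x₁ * (1 - x₁)) * g y)
        = -(x₁ * (1 - x₁))⁻¹ * ∫ y in (0:ℝ)..s, γ * θ₁ * (1 + y) * g y := by
      rw [← intervalIntegral.integral_const_mul]
      apply intervalIntegral.integral_congr
      intro y _
      field_simp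
    rw [hrw] at hFTC
    have hne : (x₁ * (1 - x₁)) ≠ 0 := hxx.ne'
    field_simp at hFTC
    linarith
  have hsplit : ∫ y in (0:ℝ)..s, γ * θ₁ * (1 + y) * g y
      = (∫ y in (0:ℝ)..s, θ₁ * γ * g y) + ∫ y in (0:ℝ)..s, γ * θ₁ * y * g y := by
    rw [← intervalIntegral.integral_add hii1 hii2]
    apply intervalIntegral.integral_congr
    intro y _
    ring
  have hpos : 0 < ∫ y in (0:ℝ)..s, γ * θ₁ * y * g y := by
    apply intervalIntegral.intervalIntegral_pos_of_pos_on hii2 _ hs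
    intro y hy
    exact mul_pos (mul_pos hγθ hy.1) (hg_pos y hy)
  have hmain : ∫ y in Set.Ioo (0:ℝ) s, g y = ∫ y in (0:ℝ)..s, g y := by
    rw [intervalIntegral.integral_of_le hs.le, MeasureTheory.integral_Ioc_eq_integral_Ioo]
  calc θ₁ * γ * ∫ y in Set.Ioo (0:ℝ) s,
        (1 + γ * y / x₁) ^ (-(θ₁ + 1))
          * (1 + (1 - γ) * y / (1 - x₁)) ^ (-(θ₂ + 1))
      = ∫ y in (0:ℝ)..s, θ₁ * γ * g y := by
        rw [intervalIntegral.integral_const_mul, ← hmain]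
    _ = (∫ y in (0:ℝ)..s, γ * θ₁ * (1 + y) * g y)
          - ∫ y in (0:ℝ)..s, γ * θ₁ * y * g y := by
        rw [hsplit]; ring
    _ < x₁ * (1 - x₁) := by rw [hI1]; linarith
end
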